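/- Let p > 0 and let C be a Hermitian positive definite complex n×n matrix. If there exists a Hermitian positive definite complex n×n matrix H satisfying HA + A*H − (1/(2p))·A*HA + (1/(4p))·(HA² + (A*)²H) = −C, then the spectrum of A belongs to the exterior parabolic region P_e = {λ ∈ ℂ : (Im λ)² > 2p·Re λ}. -/

import Mathlib

open Matrix
open scoped ComplexOrder

/-- If the parabolic Lyapunov-type equation with right-hand side `-C` has a Hermitian
positive definite solution, then the spectrum of `A` lies in the open exterior
parabolic region `P_e = {λ : (Im λ)² > 2p·Re λ}`. -/
theorem spectrum_in_parabola_exterior_of_lyapunov {n : ℕ} (p : ℝ) (hp : 0 < p)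
    (C : Matrix (Fin n) (Fin n) ℂ) (hC : C.PosDef) (A : Matrix (Fin n) (Fin n) ℂ)
    (H : Matrix (Fin n) (Fin n) ℂ) (hH : H.PosDef)
    (heq : H * A + Aᴴ * H - ((1 / (2 * p) : ℝ) : ℂ) • (Aᴴ * H * A)
      + ((1 / (4 * p) : ℝ) : ℂ) • (H * A ^ 2 + Aᴴ ^ 2 * H) = -C) :
    ∀ μ ∈ spectrum ℂ A, 2 * p * μ.re < μ.im ^ 2 := by
  intro μ hμ
  -- obtain an eigenvector
  rw [← AlgEquiv.spectrum_eq (Matrix.toLinAlgEquiv' (R := ℂ) (n := Fin n)),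
    ← Module.End.hasEigenvalue_iff_mem_spectrum] at hμ
  obtain ⟨v, hv1⟩ := hμ.exists_hasEigenvector
  have hv0 : v ≠ 0 := hv1.right
  have hv : A *ᵥ v = μ • v := by
    have := hv1.apply_eq_smul
    simpa [Matrix.toLinAlgEquiv'_apply] using this
  set h : ℂ := star v ⬝ᵥ (H *ᵥ v) with hdef
  set c : ℂ := star v ⬝ᵥ (C *ᵥ v) with cdef
  have hpos : 0 < h := hH.dotProduct_mulVec_pos hv0
  have cpos : 0 < c := hC.dotProduct_mulVec_pos hv0
  -- key star-conjugate trick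
  have starA : ∀ w : Fin n → ℂ, star v ⬝ᵥ (Aᴴ *ᵥ w) = star (A *ᵥ v) ⬝ᵥ w := by
    intro w
    rw [Matrix.dotProduct_mulVec, ← Matrix.star_mulVec]
  have hA2 : A ^ 2 *ᵥ v = (μ * μ) • v := by
    rw [pow_two, ← Matrix.mulVec_mulVec, hv, Matrix.mulVec_smul, hv, smul_smul]
  have starA2 : ∀ w : Fin n → ℂ, star v ⬝ᵥ (Aᴴ ^ 2 *ᵥ w) = star (A ^ 2 *ᵥ v) ⬝ᵥ w := by
    intro w
    rw [← Matrix.conjTranspose_pow, Matrix.dotProduct_mulVec, ← Matrix.star_mulVec]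
  have key : (μ + starRingEnd ℂ μ - ((1 / (2 * p) : ℝ) : ℂ) * (starRingEnd ℂ μ * μ)
      + ((1 / (4 * p) : ℝ) : ℂ) * (μ * μ + starRingEnd ℂ μ * starRingEnd ℂ μ)) * h = -c := by
    have e := congrArg (fun M : Matrix (Fin n) (Fin n) ℂ => star v ⬝ᵥ (M *ᵥ v)) heq
    simp only [Matrix.add_mulVec, Matrix.sub_mulVec, Matrix.smul_mulVec,
      Matrix.neg_mulVec, dotProduct_add, dotProduct_sub, dotProduct_smul, dotProduct_neg] at e
    rw [← cdef] at e
    have t1 : star v ⬝ᵥ ((H * A) *ᵥ v) = μ * h := by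
      rw [← Matrix.mulVec_mulVec, hv, Matrix.mulVec_smul, dotProduct_smul, hdef, smul_eq_mul]
    have t2 : star v ⬝ᵥ ((Aᴴ * H) *ᵥ v) = starRingEnd ℂ μ * h := by
      rw [← Matrix.mulVec_mulVec, starA, hv, star_smul, smul_dotProduct, hdef]
      simp [smul_eq_mul]
    have t3 : star v ⬝ᵥ ((Aᴴ * H * A) *ᵥ v) = starRingEnd ℂ μ * μ * h := by
      rw [← Matrix.mulVec_mulVec, hv, Matrix.mulVec_smul, dotProduct_smul,
        ← Matrix.mulVec_mulVec, starA, hv, star_smul, smul_dotProduct, hdef]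
      simp [smul_eq_mul]; ring
    have t4 : star v ⬝ᵥ ((H * A ^ 2) *ᵥ v) = μ * μ * h := by
      rw [← Matrix.mulVec_mulVec, hA2, Matrix.mulVec_smul, dotProduct_smul, hdef, smul_eq_mul]
    have t5 : star v ⬝ᵥ ((Aᴴ ^ 2 * H) *ᵥ v) = starRingEnd ℂ μ * starRingEnd ℂ μ * h := by
      rw [← Matrix.mulVec_mulVec, starA2, hA2, star_smul, smul_dotProduct, hdef]
      simp [smul_eq_mul]
    rw [t1, t2, t3, t4, t5] at e
    rw [← e]
    simp only [smul_eq_mul]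
    push_cast
    ring
  have him : h.im = 0 := by
    have := hpos.le
    rw [Complex.le_def] at this
    simpa using this.2.symm
  have hre : 0 < h.re := by
    have := hpos
    rw [Complex.lt_def] at this
    simpa using this.1
  have cre : 0 < c.re := by
    have := cpos
    rw [Complex.lt_def] at this
    simpa using this.1
  -- take real parts
  have keyre := congrArg Complex.re key
  simp only [Complex.add_re, Complex.sub_re, Complex.mul_re, Complex.mul_im,
    Complex.add_im, Complex.sub_im, Complex.conj_re, Complex.conj_im, Complex.ofReal_re,
    Complex.ofReal_im, Complex.neg_re, him] at keyre
  have hpne : p ≠ 0 := ne_of_gt hp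
  have E : (2 * μ.re - μ.im ^ 2 / p) * h.re = -c.re := by
    rw [← keyre]; field_simp; ring
  have hK : 2 * μ.re - μ.im ^ 2 / p < 0 := by
    by_contra h'
    push_neg at h'
    nlinarith
  have hq : p * (μ.im ^ 2 / p) = μ.im ^ 2 := mul_div_cancel₀ _ hpne
  have h0 := mul_neg_of_pos_of_neg hp hK
  rw [mul_sub, hq] at h0
  linarith
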